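/- arXiv:1610.05809 — 2 statements merged into one kernel-verified Lean document; each statement's English description precedes it below -/
import Mathlib

section
/- Let U be a Beta(a, b) random variable and W an independent Gamma(a+b, β) random variable (shape a+b, rate β), with a, b, β > 0. Then the product Y = W·U has a Gamma(a, β) distribution. -/
open MeasureTheory ProbabilityTheory
open scoped ENNReal NNReal
open Real Set

/-- The density of the Beta(a, b) distribution on (0,1). -/
noncomputable def betaPDFReal (a b u : ℝ) : ℝ :=
  if 0 < u ∧ u < 1 then
    Real.Gamma (a + b) / (Real.Gamma a * Real.Gamma b) * u ^ (a - 1) * (1 - u) ^ (b - 1)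
  else 0

/-- The Beta(a, b) measure on ℝ. -/
noncomputable def betaMeasure (a b : ℝ) : Measure ℝ :=
  volume.withDensity fun u => ENNReal.ofReal (_root_.betaPDFReal a b u)

lemma measurable_betaPDFReal (a b : ℝ) : Measurable (_root_.betaPDFReal a b) := by
  unfold _root_.betaPDFReal
  refine Measurable.ite ?_ ?_ measurable_const
  · exact (measurableSet_Ioi.inter measurableSet_Iio : MeasurableSet {u : ℝ | 0 < u ∧ u < 1})
  · exact ((measurable_id'.pow_const _).const_mul _).mul
      ((measurable_const.sub measurable_id').pow_const _)

lemma gammaPDFReal_of_neg' {c r x : ℝ} (hx : x < 0) : gammaPDFReal c r x = 0 := by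
  unfold gammaPDFReal; rw [if_neg (not_le.mpr hx)]

lemma pointwise_eq {a b β : ℝ} (ha : 0 < a) (hb : 0 < b) (hβ : 0 < β)
    {y : ℝ} (hy : 0 < y) {w : ℝ} (hw : w ≠ y) :
    ENNReal.ofReal (gammaPDFReal (a + b) β w) * ENNReal.ofReal w⁻¹ *
      ENNReal.ofReal (_root_.betaPDFReal a b (y / w)) =
    ENNReal.ofReal (gammaPDFReal a β y) * ENNReal.ofReal (gammaPDFReal b β (w - y)) := by
  rcases le_or_gt w 0 with hw0 | hw0
  · have hR : gammaPDFReal b β (w - y) = 0 := gammaPDFReal_of_neg' (by linarith)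
    rcases eq_or_lt_of_le hw0 with rfl | hwneg
    · rw [zero_sub] at hR
      simp [hR]
    · rw [gammaPDFReal_of_neg' hwneg, hR]; simp
  · rcases lt_or_ge w y with hwy | hwy
    · have hB : _root_.betaPDFReal a b (y / w) = 0 := by
        unfold _root_.betaPDFReal
        rw [if_neg]
        rintro ⟨h1, h2⟩
        rw [div_lt_one hw0] at h2; linarith
      rw [hB, gammaPDFReal_of_neg' (by linarith : w - y < 0)]; simp
    · have hwy' : y < w := lt_of_le_of_ne hwy (Ne.symm hw)
      have hyw1 : y / w < 1 := (div_lt_one hw0).mpr hwy'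
      have hyw0 : 0 < y / w := div_pos hy hw0
      unfold gammaPDFReal _root_.betaPDFReal
      rw [if_pos (le_of_lt hw0), if_pos ⟨hyw0, hyw1⟩, if_pos hy.le,
        if_pos (by linarith : (0:ℝ) ≤ w - y)]
      rw [← ENNReal.ofReal_mul (by positivity), ← ENNReal.ofReal_mul (by positivity),
        ← ENNReal.ofReal_mul (by positivity)]
      congr 1
      have hGa := (Real.Gamma_pos_of_pos ha).ne'
      have hGb := (Real.Gamma_pos_of_pos hb).ne'
      have hGab := (Real.Gamma_pos_of_pos (show (0:ℝ) < a + b by linarith)).ne'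
      have h1 : (y / w) ^ (a - 1) = y ^ (a - 1) / w ^ (a - 1) :=
        Real.div_rpow hy.le hw0.le (a - 1)
      have h2 : (1 - y / w) = (w - y) / w := by field_simp
      have h3 : ((w - y) / w) ^ (b - 1) = (w - y) ^ (b - 1) / w ^ (b - 1) :=
        Real.div_rpow (by linarith) hw0.le (b - 1)
      have h4 : w ^ (a + b - 1) = w ^ (a - 1) * (w ^ (b - 1) * w) := by
        rw [show a + b - 1 = (a - 1) + ((b - 1) + 1) by ring, Real.rpow_add hw0,
          Real.rpow_add hw0, Real.rpow_one]
      have h5 : β ^ (a + b) = β ^ a * β ^ b := by rw [Real.rpow_add hβ]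
      have h6 : Real.exp (-(β * w)) = Real.exp (-(β * y)) * Real.exp (-(β * (w - y))) := by
        rw [← Real.exp_add]; ring_nf
      rw [h1, h2, h3, h4, h5, h6]
      have hwa := (Real.rpow_pos_of_pos hw0 (a - 1)).ne'
      have hwb := (Real.rpow_pos_of_pos hw0 (b - 1)).ne'
      field_simp

/-- The convolution-style integral giving the Gamma(a,β) pdf. -/
lemma conv_eq {a b β : ℝ} (ha : 0 < a) (hb : 0 < b) (hβ : 0 < β)
    {y : ℝ} (hy : 0 < y) :
    ∫⁻ w, gammaPDF (a + b) β w * ENNReal.ofReal w⁻¹ *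
      ENNReal.ofReal (_root_.betaPDFReal a b (y / w)) = gammaPDF a β y := by
  have hae : ∀ᵐ w : ℝ, w ≠ y := by
    have : (volume : Measure ℝ) {y} = 0 := measure_singleton y
    rw [ae_iff]
    simpa [Set.setOf_eq_eq_singleton] using this
  calc ∫⁻ w, gammaPDF (a + b) β w * ENNReal.ofReal w⁻¹ *
        ENNReal.ofReal (_root_.betaPDFReal a b (y / w))
      = ∫⁻ w, gammaPDF a β y * gammaPDF b β (w - y) := by
        refine lintegral_congr_ae ?_
        filter_upwards [hae] with w hw
        exact pointwise_eq ha hb hβ hy hw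
    _ = gammaPDF a β y * ∫⁻ w, gammaPDF b β (w - y) :=
        lintegral_const_mul _ (((measurable_gammaPDFReal b β).comp
          (measurable_id.sub_const y)).ennreal_ofReal)
    _ = gammaPDF a β y * ∫⁻ w, gammaPDF b β w := by
        rw [lintegral_sub_right_eq_self (gammaPDF b β) y]
    _ = gammaPDF a β y := by rw [lintegral_gammaPDF_eq_one hb hβ, mul_one]

/-- Scaling change of variables for lintegrals on ℝ. -/
lemma lintegral_scale {w : ℝ} (hw : 0 < w) (F : ℝ → ℝ≥0∞) (hF : Measurable F) :
    ∫⁻ u, F (w * u) = ENNReal.ofReal w⁻¹ * ∫⁻ y, F y := by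
  rw [← lintegral_map hF (measurable_const_mul w), Real.map_volume_mul_left hw.ne',
    lintegral_smul_measure, abs_of_pos (inv_pos.mpr hw), smul_eq_mul]

/-- If `U ~ Beta(a, b)` and `W ~ Gamma(a+b, β)` are independent, then
`Y = W * U ~ Gamma(a, β)`. -/
theorem mul_beta_gamma_is_gamma {Ω : Type*} [MeasurableSpace Ω]
    (μ : Measure Ω) [IsProbabilityMeasure μ]
    (a b β : ℝ) (ha : 0 < a) (hb : 0 < b) (hβ : 0 < β)
    (U W : Ω → ℝ) (hUm : Measurable U) (hWm : Measurable W)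
    (hU : μ.map U = _root_.betaMeasure a b)
    (hW : μ.map W = gammaMeasure (a + b) β)
    (hind : IndepFun U W μ) :
    μ.map (fun ω => W ω * U ω) = gammaMeasure a β := by
  set B : ℝ → ℝ≥0∞ := fun u => ENNReal.ofReal (_root_.betaPDFReal a b u) with hBdef
  have hBm : Measurable B := (_root_.measurable_betaPDFReal a b).ennreal_ofReal
  have hGm : Measurable (gammaPDF (a + b) β) :=
    (measurable_gammaPDFReal (a + b) β).ennreal_ofReal
  -- joint law
  have hjoint : μ.map (fun ω => (U ω, W ω)) =
      (_root_.betaMeasure a b).prod (gammaMeasure (a + b) β) := by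
    rw [← hU, ← hW]
    exact (indepFun_iff_map_prod_eq_prod_map_map hUm.aemeasurable hWm.aemeasurable).mp hind
  have hmul : Measurable fun p : ℝ × ℝ => p.2 * p.1 := measurable_snd.mul measurable_fst
  have hmap : μ.map (fun ω => W ω * U ω) =
      ((_root_.betaMeasure a b).prod (gammaMeasure (a + b) β)).map (fun p : ℝ × ℝ => p.2 * p.1) := by
    rw [← hjoint, Measure.map_map hmul (hUm.prodMk hWm)]
    rfl
  haveI : IsProbabilityMeasure (gammaMeasure (a + b) β) :=
    isProbabilityMeasure_gammaMeasure (by linarith : (0:ℝ) < a + b) hβ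
  rw [hmap]
  ext s hs
  rw [Measure.map_apply hmul hs]
  have hT : MeasurableSet ((fun p : ℝ × ℝ => p.2 * p.1) ⁻¹' s) := hmul hs
  rw [Measure.prod_apply hT]
  -- slice computation
  have hslice : ∀ u : ℝ, gammaMeasure (a + b) β (Prod.mk u ⁻¹' ((fun p : ℝ × ℝ => p.2 * p.1) ⁻¹' s))
      = ∫⁻ w, gammaPDF (a + b) β w * s.indicator (fun _ => (1 : ℝ≥0∞)) (w * u) := by
    intro u
    have hpre : Prod.mk u ⁻¹' ((fun p : ℝ × ℝ => p.2 * p.1) ⁻¹' s)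
        = (fun w => w * u) ⁻¹' s := rfl
    rw [hpre, gammaMeasure, withDensity_apply _ ((measurable_mul_const u) hs),
      ← lintegral_indicator ((measurable_mul_const u) hs) _]
    refine lintegral_congr fun w => ?_
    by_cases hws : w * u ∈ s <;> simp [Set.indicator, hws]
  simp_rw [hslice]
  -- unfold the beta measure
  have hIm : Measurable fun u : ℝ =>
      ∫⁻ w, gammaPDF (a + b) β w * s.indicator (fun _ => (1 : ℝ≥0∞)) (w * u) := by
    apply Measurable.lintegral_prod_right'
      (f := fun p : ℝ × ℝ => gammaPDF (a + b) β p.2 * s.indicator (fun _ => (1 : ℝ≥0∞)) (p.2 * p.1))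
    exact (hGm.comp measurable_snd).mul
      ((measurable_const.indicator hs).comp (measurable_snd.mul measurable_fst))
  rw [_root_.betaMeasure, lintegral_withDensity_eq_lintegral_mul _ hBm hIm]
  simp only [Pi.mul_apply]
  -- push B inside
  have hpush : ∀ u : ℝ, B u * ∫⁻ w, gammaPDF (a + b) β w *
        s.indicator (fun _ => (1 : ℝ≥0∞)) (w * u)
      = ∫⁻ w, B u * (gammaPDF (a + b) β w * s.indicator (fun _ => (1 : ℝ≥0∞)) (w * u)) := by
    intro u
    exact (lintegral_const_mul _ (hGm.mul
      ((measurable_const.indicator hs).comp (measurable_mul_const u)))).symm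
  simp_rw [hpush]
  rw [lintegral_lintegral_swap]
  swap
  · apply Measurable.aemeasurable
    exact ((hBm.comp measurable_fst).mul ((hGm.comp measurable_snd).mul
      ((measurable_const.indicator hs).comp (measurable_snd.mul measurable_fst))))
  -- inner change of variables (in u), for a.e. w
  have hinner : ∀ᵐ w : ℝ, (∫⁻ u, B u * (gammaPDF (a + b) β w *
        s.indicator (fun _ => (1 : ℝ≥0∞)) (w * u)))
      = ∫⁻ y, gammaPDF (a + b) β w * ENNReal.ofReal w⁻¹ * B (y / w) *
          s.indicator (fun _ => (1 : ℝ≥0∞)) y := by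
    have hae : ∀ᵐ w : ℝ, w ≠ 0 := by
      rw [ae_iff]
      simpa [Set.setOf_eq_eq_singleton] using (measure_singleton (0:ℝ))
    filter_upwards [hae] with w hw
    rcases hw.lt_or_gt with hneg | hpos
    · have hG0 : gammaPDF (a + b) β w = 0 := gammaPDF_of_neg hneg
      simp [hG0]
    · set F : ℝ → ℝ≥0∞ := fun y => gammaPDF (a + b) β w * ENNReal.ofReal w⁻¹ * B (y / w) *
        s.indicator (fun _ => (1 : ℝ≥0∞)) y with hFdef
      have hFm : Measurable F := ((measurable_const.mul
        (hBm.comp (measurable_id.div_const w))).mul (measurable_const.indicator hs))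
      have key := lintegral_scale hpos F hFm
      have hFwu : ∀ u : ℝ, F (w * u) = ENNReal.ofReal w⁻¹ *
          (B u * (gammaPDF (a + b) β w * s.indicator (fun _ => (1 : ℝ≥0∞)) (w * u))) := by
        intro u
        have hdiv : w * u / w = u := by field_simp
        rw [hFdef]
        simp only [hdiv]
        ring
      have hc0 : (ENNReal.ofReal w⁻¹) ≠ 0 := by
        simp only [ne_eq, ENNReal.ofReal_eq_zero, not_le]
        exact inv_pos.mpr hpos
      have hmeasf : Measurable fun u : ℝ => B u * (gammaPDF (a + b) β w *
          s.indicator (fun _ => (1 : ℝ≥0∞)) (w * u)) :=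
        hBm.mul (measurable_const.mul ((measurable_const.indicator hs).comp
          (measurable_const_mul w)))
      have key2 : ENNReal.ofReal w⁻¹ * ∫⁻ u, B u * (gammaPDF (a + b) β w *
            s.indicator (fun _ => (1 : ℝ≥0∞)) (w * u))
          = ENNReal.ofReal w⁻¹ * ∫⁻ y, F y := by
        rw [← lintegral_const_mul _ hmeasf]
        rw [funext hFwu] at key
        exact key
      exact (ENNReal.mul_right_inj hc0 ENNReal.ofReal_ne_top).mp key2
  rw [lintegral_congr_ae hinner, lintegral_lintegral_swap (Measurable.aemeasurable
    (((((hGm.comp measurable_fst).mul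
      (ENNReal.measurable_ofReal.comp measurable_fst.inv)).mul
      (hBm.comp (measurable_snd.div measurable_fst))).mul
      ((measurable_const.indicator hs).comp measurable_snd))))]
  have hpull : ∀ y : ℝ, (∫⁻ w, gammaPDF (a + b) β w * ENNReal.ofReal w⁻¹ * B (y / w) *
        s.indicator (fun _ => (1 : ℝ≥0∞)) y)
      = (∫⁻ w, gammaPDF (a + b) β w * ENNReal.ofReal w⁻¹ * B (y / w)) *
        s.indicator (fun _ => (1 : ℝ≥0∞)) y := by
    intro y
    exact lintegral_mul_const _ ((hGm.mul
      (ENNReal.measurable_ofReal.comp measurable_inv)).mul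
      (hBm.comp (measurable_const.div measurable_id)))
  simp_rw [hpull]
  have hfin : ∀ᵐ y : ℝ, (∫⁻ w, gammaPDF (a + b) β w * ENNReal.ofReal w⁻¹ * B (y / w)) *
        s.indicator (fun _ => (1 : ℝ≥0∞)) y
      = gammaPDF a β y * s.indicator (fun _ => (1 : ℝ≥0∞)) y := by
    have hae : ∀ᵐ y : ℝ, y ≠ 0 := by
      rw [ae_iff]
      simpa [Set.setOf_eq_eq_singleton] using (measure_singleton (0:ℝ))
    filter_upwards [hae] with y hy
    rcases hy.lt_or_gt with hneg | hpos
    · have hz : ∀ w : ℝ, gammaPDF (a + b) β w * ENNReal.ofReal w⁻¹ * B (y / w) = 0 := by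
        intro w
        rcases lt_trichotomy w 0 with h | h | h
        · rw [gammaPDF_of_neg h]; simp
        · subst h; simp
        · have hB0 : _root_.betaPDFReal a b (y / w) = 0 := by
            unfold _root_.betaPDFReal
            rw [if_neg]
            rintro ⟨h1, _⟩
            exact absurd h1 (not_lt.mpr (div_neg_of_neg_of_pos hneg h).le)
          rw [hBdef]
          simp [hB0]
      rw [lintegral_congr hz, lintegral_zero, gammaPDF_of_neg hneg]
    · rw [hBdef]
      rw [conv_eq ha hb hβ hpos]
  rw [lintegral_congr_ae hfin, gammaMeasure, withDensity_apply _ hs, ← lintegral_indicator hs]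
  refine lintegral_congr fun y => ?_
  by_cases hys : y ∈ s <;> simp [Set.indicator, hys]
end

section
/- Let U be a Beta(a, b) random variable and W an independent Gamma(a+b, β) random variable. Then W·U and W·(1−U) are independent, with distributions Gamma(a, β) and Gamma(b, β) respectively. -/
open MeasureTheory ProbabilityTheory

namespace BetaGammaAux

open Real Set
open scoped ENNReal

noncomputable def Tmap (p : ℝ × ℝ) : ℝ × ℝ := (p.2 * p.1, p.2 * (1 - p.1))

noncomputable def Tderiv (p : ℝ × ℝ) : ℝ × ℝ →L[ℝ] ℝ × ℝ :=
  LinearMap.toContinuousLinearMap (Matrix.toLin (Module.Basis.finTwoProd ℝ) (Module.Basis.finTwoProd ℝ)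
    !![p.2, p.1; -p.2, 1 - p.1])

lemma hasFDerivAt_Tmap (p : ℝ × ℝ) : HasFDerivAt Tmap (Tderiv p) p := by
  unfold Tmap Tderiv
  rw [Matrix.toLin_finTwoProd_toContinuousLinearMap]
  convert HasFDerivAt.prodMk (𝕜 := ℝ)
    ((hasFDerivAt_snd (𝕜 := ℝ) (p := p)).mul (hasFDerivAt_fst (𝕜 := ℝ) (p := p)))
    ((hasFDerivAt_snd (𝕜 := ℝ) (p := p)).mul ((hasFDerivAt_const (1:ℝ) p).sub (hasFDerivAt_fst (𝕜 := ℝ) (p := p)))) using 2 <;>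
  · ext q <;> simp [smul_smul, mul_comm] <;> ring

lemma Tderiv_det (p : ℝ × ℝ) : (Tderiv p).det = p.2 := by
  unfold Tderiv
  simp [LinearMap.det_toContinuousLinearMap, LinearMap.det_toLin, Matrix.det_fin_two_of]
  ring

lemma measurable_Tmap : Measurable Tmap :=
  (measurable_snd.mul measurable_fst).prodMk
    (measurable_snd.mul (measurable_const.sub measurable_fst))

def Sset : Set (ℝ × ℝ) := Ioo (0:ℝ) 1 ×ˢ Ioi (0:ℝ)
def Qset : Set (ℝ × ℝ) := Ioi (0:ℝ) ×ˢ Ioi (0:ℝ)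

lemma measurableSet_Sset : MeasurableSet Sset := measurableSet_Ioo.prod measurableSet_Ioi
lemma measurableSet_Qset : MeasurableSet Qset := measurableSet_Ioi.prod measurableSet_Ioi

lemma injOn_Tmap : InjOn Tmap Sset := by
  rintro ⟨u, w⟩ ⟨⟨hu0, hu1⟩, hw⟩ ⟨u', w'⟩ ⟨⟨hu0', hu1'⟩, hw'⟩ h
  simp only [Tmap, Prod.mk.injEq] at h
  obtain ⟨h1, h2⟩ := h
  simp only [mem_Ioi] at hw hw'
  have hww : w = w' := by nlinarith
  subst hww
  have : u = u' := by
    have := mul_left_cancel₀ (ne_of_gt hw) h1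
    linarith
  simp [this]

lemma image_Tmap : Tmap '' Sset = Qset := by
  ext ⟨x, y⟩
  constructor
  · rintro ⟨⟨u, w⟩, ⟨⟨hu0, hu1⟩, hw⟩, heq⟩
    simp only [Tmap, Prod.mk.injEq] at heq
    simp only [mem_Ioi] at hw
    obtain ⟨h1, h2⟩ := heq
    exact ⟨h1 ▸ mul_pos hw hu0, h2 ▸ mul_pos hw (by simp at hu1 hu0 ⊢; linarith)⟩
  · rintro ⟨hx, hy⟩
    simp only [mem_Ioi] at hx hy
    refine ⟨(x / (x + y), x + y), ⟨⟨?_, ?_⟩, ?_⟩, ?_⟩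
    · exact div_pos hx (by linarith)
    · rw [div_lt_one (by linarith)]; linarith
    · simpa using by linarith
    · simp only [Tmap, Prod.mk.injEq]
      constructor
      · field_simp
      · field_simp; ring

lemma density_identity {a b β : ℝ} (ha : 0 < a) (hb : 0 < b) (hβ : 0 < β)
    {u w : ℝ} (hu0 : 0 < u) (hu1 : u < 1) (hw : 0 < w) :
    _root_.betaPDFReal a b u * gammaPDFReal (a + b) β w
      = w * (gammaPDFReal a β (w * u) * gammaPDFReal b β (w * (1 - u))) := by
  have h1u : 0 < 1 - u := by linarith
  rw [_root_.betaPDFReal, if_pos ⟨hu0, hu1⟩, gammaPDFReal, if_pos hw.le,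
    gammaPDFReal, if_pos (mul_pos hw hu0).le, gammaPDFReal, if_pos (mul_pos hw h1u).le]
  have hΓa := Real.Gamma_pos_of_pos ha
  have hΓb := Real.Gamma_pos_of_pos hb
  have hΓab := Real.Gamma_pos_of_pos (by linarith : (0:ℝ) < a + b)
  rw [mul_rpow hw.le hu0.le, mul_rpow hw.le h1u.le,
    Real.rpow_add hβ, show a + b - 1 = (a - 1) + ((b - 1) + 1) by ring,
    Real.rpow_add hw, Real.rpow_add hw, Real.rpow_one,
    show -(β * (w * u)) = -(β * w) * u by ring,
    show -(β * (w * (1-u))) = (-(β*w)) * (1 - u) by ring]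
  rw [show Real.exp (-(β*w)) = Real.exp ((-(β*w))*u) * Real.exp ((-(β*w))*(1-u)) by
    rw [← Real.exp_add]; congr 1; ring]
  field_simp

lemma betaPDFReal_nonneg {a b : ℝ} (ha : 0 < a) (hb : 0 < b) (u : ℝ) :
    0 ≤ _root_.betaPDFReal a b u := by
  rw [_root_.betaPDFReal]
  split_ifs with h
  · have hΓa := Real.Gamma_pos_of_pos ha
    have hΓb := Real.Gamma_pos_of_pos hb
    have hΓab := Real.Gamma_pos_of_pos (by linarith : (0:ℝ) < a + b)
    have := Real.rpow_nonneg h.1.le (a - 1)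
    have := Real.rpow_nonneg (by linarith [h.2] : (0:ℝ) ≤ 1 - u) (b - 1)
    positivity
  · exact le_refl _

lemma measurable_betaPDFReal (a b : ℝ) : Measurable (_root_.betaPDFReal a b) := by
  unfold _root_.betaPDFReal
  refine Measurable.ite ?_ ?_ measurable_const
  · exact (measurableSet_Ioi.inter measurableSet_Iio)
  · fun_prop

lemma prod_withDensity (f g : ℝ → ℝ≥0∞) (hf : Measurable f) (hg : Measurable g)
    [SigmaFinite (volume.withDensity f)] [SigmaFinite (volume.withDensity g)] :
    (volume.withDensity f).prod (volume.withDensity g)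
      = (volume : Measure (ℝ × ℝ)).withDensity (fun p => f p.1 * g p.2) := by
  refine Measure.prod_eq fun s t hs ht => ?_
  rw [withDensity_apply _ (hs.prod ht), Measure.volume_eq_prod, ← Measure.prod_restrict,
    lintegral_prod_mul hf.aemeasurable hg.aemeasurable,
    withDensity_apply _ hs, withDensity_apply _ ht]

lemma vline_null : (volume : Measure (ℝ × ℝ)) (univ ×ˢ ({0} : Set ℝ)) = 0 := by
  rw [Measure.volume_eq_prod, Measure.prod_prod]; simp

lemma hline_null : (volume : Measure (ℝ × ℝ)) (({0} : Set ℝ) ×ˢ univ) = 0 := by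
  rw [Measure.volume_eq_prod, Measure.prod_prod]; simp

end BetaGammaAux

namespace BetaGammaAux2
open BetaGammaAux Real Set
open scoped ENNReal

lemma withDensity_restrict_of_null_diff {g : ℝ × ℝ → ℝ≥0∞} {s : Set (ℝ × ℝ)}
    (hs : MeasurableSet s)
    (hnull : (volume : Measure (ℝ × ℝ)) {p | g p ≠ 0 ∧ p ∉ s} = 0) :
    (volume : Measure (ℝ × ℝ)).withDensity g = (volume.restrict s).withDensity g := by
  rw [← withDensity_indicator hs]
  refine withDensity_congr_ae ?_
  rw [Filter.EventuallyEq, ae_iff]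
  refine measure_mono_null (fun p hp => ?_) hnull
  simp only [mem_setOf_eq] at hp ⊢
  by_cases hps : p ∈ s
  · exact absurd (Set.indicator_of_mem hps g).symm hp
  · rw [Set.indicator_of_notMem hps] at hp
    exact ⟨hp, hps⟩

lemma gammaMeasure_def' (c r : ℝ) :
    gammaMeasure c r = volume.withDensity fun x => ENNReal.ofReal (gammaPDFReal c r x) := rfl

lemma map_Tmap {a b β : ℝ} (ha : 0 < a) (hb : 0 < b) (hβ : 0 < β) :
    ((_root_.betaMeasure a b).prod (gammaMeasure (a + b) β)).map Tmap
      = (gammaMeasure a β).prod (gammaMeasure b β) := by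
  have hab : (0:ℝ) < a + b := by linarith
  set gBig : ℝ × ℝ → ℝ≥0∞ := fun p =>
    ENNReal.ofReal (_root_.betaPDFReal a b p.1) * ENNReal.ofReal (gammaPDFReal (a+b) β p.2) with hgBig
  set hBig : ℝ × ℝ → ℝ≥0∞ := fun x =>
    ENNReal.ofReal (gammaPDFReal a β x.1) * ENNReal.ofReal (gammaPDFReal b β x.2) with hhBig
  have hsrc : (_root_.betaMeasure a b).prod (gammaMeasure (a + b) β)
      = (volume.restrict Sset).withDensity gBig := by
    rw [_root_.betaMeasure, gammaMeasure_def',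
      prod_withDensity (fun u => ENNReal.ofReal (_root_.betaPDFReal a b u))
        (fun x => ENNReal.ofReal (gammaPDFReal (a+b) β x))
        (ENNReal.measurable_ofReal.comp (BetaGammaAux.measurable_betaPDFReal a b))
        (ENNReal.measurable_ofReal.comp (measurable_gammaPDFReal (a+b) β))]
    refine withDensity_restrict_of_null_diff measurableSet_Sset
      (measure_mono_null (fun p hp => ?_) vline_null)
    simp only [mem_setOf_eq] at hp
    obtain ⟨hne, hns⟩ := hp
    have hbne : _root_.betaPDFReal a b p.1 ≠ 0 := by
      intro h0; apply hne; simp [hgBig, h0]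
    have hgne : gammaPDFReal (a+b) β p.2 ≠ 0 := by
      intro h0; apply hne; simp [hgBig, h0]
    have hu : 0 < p.1 ∧ p.1 < 1 := by
      by_contra hcon
      exact hbne (by rw [_root_.betaPDFReal, if_neg hcon])
    have hw : 0 ≤ p.2 := by
      by_contra hcon
      exact hgne (by rw [gammaPDFReal, if_neg hcon])
    have hw0 : p.2 = 0 := by
      by_contra hcon
      exact hns ⟨hu, lt_of_le_of_ne hw (Ne.symm hcon)⟩
    exact ⟨trivial, hw0⟩
  have htgt : (gammaMeasure a β).prod (gammaMeasure b β)
      = (volume.restrict Qset).withDensity hBig := by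
    rw [gammaMeasure_def', gammaMeasure_def',
      prod_withDensity (fun x => ENNReal.ofReal (gammaPDFReal a β x))
        (fun x => ENNReal.ofReal (gammaPDFReal b β x))
        (ENNReal.measurable_ofReal.comp (measurable_gammaPDFReal a β))
        (ENNReal.measurable_ofReal.comp (measurable_gammaPDFReal b β))]
    refine withDensity_restrict_of_null_diff measurableSet_Qset
      (measure_mono_null (t := ({0} : Set ℝ) ×ˢ (univ : Set ℝ) ∪ (univ : Set ℝ) ×ˢ ({0} : Set ℝ))
        (fun p hp => ?_) ?_)
    · show p ∈ ({0} : Set ℝ) ×ˢ (univ : Set ℝ) ∪ (univ : Set ℝ) ×ˢ ({0} : Set ℝ)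
      simp only [mem_setOf_eq] at hp
      obtain ⟨hne, hns⟩ := hp
      have h1ne : gammaPDFReal a β p.1 ≠ 0 := by
        intro h0; apply hne; simp [hhBig, h0]
      have h2ne : gammaPDFReal b β p.2 ≠ 0 := by
        intro h0; apply hne; simp [hhBig, h0]
      have h1 : 0 ≤ p.1 := by
        by_contra hcon; exact h1ne (by rw [gammaPDFReal, if_neg hcon])
      have h2 : 0 ≤ p.2 := by
        by_contra hcon; exact h2ne (by rw [gammaPDFReal, if_neg hcon])
      rcases eq_or_lt_of_le h1 with h1' | h1'
      · exact Or.inl ⟨h1'.symm, trivial⟩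
      rcases eq_or_lt_of_le h2 with h2' | h2'
      · exact Or.inr ⟨trivial, h2'.symm⟩
      · exact absurd ⟨h1', h2'⟩ hns
    · exact measure_union_null hline_null vline_null
  have hmg : Measurable gBig :=
    ((ENNReal.measurable_ofReal.comp (BetaGammaAux.measurable_betaPDFReal a b)).comp measurable_fst).mul
      ((ENNReal.measurable_ofReal.comp (measurable_gammaPDFReal (a+b) β)).comp measurable_snd)
  have hmh : Measurable hBig :=
    ((ENNReal.measurable_ofReal.comp (measurable_gammaPDFReal a β)).comp measurable_fst).mul
      ((ENNReal.measurable_ofReal.comp (measurable_gammaPDFReal b β)).comp measurable_snd)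
  rw [hsrc, htgt]
  ext A hA
  rw [Measure.map_apply measurable_Tmap hA,
    withDensity_apply _ (measurable_Tmap hA), withDensity_apply _ hA,
    Measure.restrict_restrict (measurable_Tmap hA), Measure.restrict_restrict hA]
  have hSA : MeasurableSet (Sset ∩ Tmap ⁻¹' A) :=
    measurableSet_Sset.inter (measurable_Tmap hA)
  have hderiv : ∀ p ∈ Sset ∩ Tmap ⁻¹' A,
      HasFDerivWithinAt Tmap (Tderiv p) (Sset ∩ Tmap ⁻¹' A) p :=
    fun p _ => (hasFDerivAt_Tmap p).hasFDerivWithinAt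
  calc ∫⁻ p in Tmap ⁻¹' A ∩ Sset, gBig p
      = ∫⁻ p in Sset ∩ Tmap ⁻¹' A, gBig p := by rw [inter_comm]
    _ = ∫⁻ p in Sset ∩ Tmap ⁻¹' A, ENNReal.ofReal |(Tderiv p).det| * hBig (Tmap p) := by
        refine setLIntegral_congr_fun hSA (fun p hp => ?_)
        obtain ⟨⟨hu, hw⟩, -⟩ := hp
        simp only [mem_Ioo] at hu
        simp only [mem_Ioi] at hw
        rw [Tderiv_det, abs_of_pos hw, hgBig, hhBig]
        simp only [Tmap]
        rw [← ENNReal.ofReal_mul (gammaPDFReal_nonneg ha hβ _),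
          ← ENNReal.ofReal_mul hw.le,
          ← ENNReal.ofReal_mul (betaPDFReal_nonneg ha hb _)]
        exact congrArg ENNReal.ofReal (density_identity ha hb hβ hu.1 hu.2 hw)
    _ = ∫⁻ x in Tmap '' (Sset ∩ Tmap ⁻¹' A), hBig x :=
        (lintegral_image_eq_lintegral_abs_det_fderiv_mul volume hSA hderiv
          (injOn_Tmap.mono inter_subset_left) hBig).symm
    _ = ∫⁻ x in A ∩ Qset, hBig x := by
        rw [image_inter_preimage, image_Tmap, inter_comm]

end BetaGammaAux2

/-- Beta–gamma algebra: if `U ~ Beta(a, b)` and `W ~ Gamma(a+b, β)` are independent,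
then `W·U` and `W·(1−U)` are independent with distributions `Gamma(a, β)` and
`Gamma(b, β)` respectively. -/
theorem beta_gamma_algebra {Ω : Type*} [MeasurableSpace Ω]
    (μ : Measure Ω) [IsProbabilityMeasure μ]
    (a b β : ℝ) (ha : 0 < a) (hb : 0 < b) (hβ : 0 < β)
    (U W : Ω → ℝ) (hUm : Measurable U) (hWm : Measurable W)
    (hU : μ.map U = _root_.betaMeasure a b)
    (hW : μ.map W = gammaMeasure (a + b) β)
    (hind : IndepFun U W μ) :
    IndepFun (fun ω => W ω * U ω) (fun ω => W ω * (1 - U ω)) μ ∧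
      μ.map (fun ω => W ω * U ω) = gammaMeasure a β ∧
      μ.map (fun ω => W ω * (1 - U ω)) = gammaMeasure b β := by
  have hab : (0:ℝ) < a + b := by linarith
  have hPa : IsProbabilityMeasure (gammaMeasure a β) := isProbabilityMeasure_gammaMeasure ha hβ
  have hPb : IsProbabilityMeasure (gammaMeasure b β) := isProbabilityMeasure_gammaMeasure hb hβ
  have hPab : IsProbabilityMeasure (gammaMeasure (a + b) β) := isProbabilityMeasure_gammaMeasure hab hβ
  have hpair : μ.map (fun ω => (U ω, W ω)) = (_root_.betaMeasure a b).prod (gammaMeasure (a + b) β) := by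
    rw [(indepFun_iff_map_prod_eq_prod_map_map hUm.aemeasurable hWm.aemeasurable).mp hind,
      hU, hW]
  set f2 : Ω → ℝ × ℝ := fun ω => (W ω * U ω, W ω * (1 - U ω)) with hf2
  have hf2m : Measurable f2 := (hWm.mul hUm).prodMk (hWm.mul (measurable_const.sub hUm))
  have hcomp : f2 = BetaGammaAux.Tmap ∘ (fun ω => (U ω, W ω)) := rfl
  have hjoint : μ.map f2 = (gammaMeasure a β).prod (gammaMeasure b β) := by
    rw [hcomp, ← Measure.map_map BetaGammaAux.measurable_Tmap (hUm.prodMk hWm), hpair,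
      BetaGammaAux2.map_Tmap ha hb hβ]
  have h1m : Measurable fun ω => W ω * U ω := hWm.mul hUm
  have h2m : Measurable fun ω => W ω * (1 - U ω) := hWm.mul (measurable_const.sub hUm)
  have hm1 : μ.map (fun ω => W ω * U ω) = gammaMeasure a β := by
    have h : (fun ω => W ω * U ω) = Prod.fst ∘ f2 := rfl
    rw [h, ← Measure.map_map measurable_fst hf2m, hjoint, Measure.map_fst_prod]
    simp
  have hm2 : μ.map (fun ω => W ω * (1 - U ω)) = gammaMeasure b β := by
    have h : (fun ω => W ω * (1 - U ω)) = Prod.snd ∘ f2 := rfl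
    rw [h, ← Measure.map_map measurable_snd hf2m, hjoint, Measure.map_snd_prod]
    simp
  refine ⟨?_, hm1, hm2⟩
  rw [indepFun_iff_map_prod_eq_prod_map_map h1m.aemeasurable h2m.aemeasurable, hm1, hm2]
  exact hjoint
end
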